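/- Let F be a field, k ≥ 1, d ≥ 1, and let f_c(x) = x^{k+d} + f_{d-1}x^{k+d-1} + ⋯ + f_0 x^k ∈ F[x]. Let L_{f_0,…,f_{d-1}}(x₁,…,x_{k+1}) denote the coefficient of x^k in the remainder of f_c divided by ∏_{i=1}^{k+1}(x - x_i), viewed as a polynomial in F[x₁,…,x_{k+1}]. Then L has total degree at most d, and its homogeneous component of degree d equals L_{0,…,0}, the corresponding coefficient for f(x) = x^{k+d}. -/

import Mathlib

open Polynomial

/-- Coefficients of `∏ (X - C vᵢ)` with each `vᵢ` homogeneous of degree 1 are homogeneous. -/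
lemma aux_prod_coeff_homog {F : Type*} [Field F] {σ ι : Type*} (s : Finset ι)
    (v : ι → MvPolynomial σ F) (hv : ∀ i, (v i).IsHomogeneous 1) (j : ℕ) :
    (((∏ i ∈ s, (X - C (v i)) : Polynomial (MvPolynomial σ F))).coeff j).IsHomogeneous
      (s.card - j) := by
  induction s using Finset.cons_induction generalizing j with
  | empty =>
    simp only [Finset.prod_empty, coeff_one, Finset.card_empty]
    split
    · subst_vars; simpa using MvPolynomial.isHomogeneous_one _ _
    · exact MvPolynomial.isHomogeneous_zero _ _ _
  | cons a s ha IH =>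
    have hmonic : (∏ i ∈ s, (X - C (v i)) : Polynomial (MvPolynomial σ F)).Monic :=
      monic_prod_of_monic _ _ fun i _ => monic_X_sub_C _
    have hdeg : (∏ i ∈ s, (X - C (v i)) : Polynomial (MvPolynomial σ F)).natDegree = s.card := by
      rw [natDegree_prod_of_monic _ _ fun i _ => monic_X_sub_C _]
      simp
    rw [Finset.prod_cons, Finset.card_cons, sub_mul, coeff_sub, coeff_C_mul]
    rcases j with _ | m
    · rw [mul_coeff_zero, coeff_X_zero, zero_mul, zero_sub]
      have := (hv a).mul (IH 0)
      convert this.neg using 1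
      rfl; omega
    · rw [coeff_X_mul]
      refine MvPolynomial.IsHomogeneous.sub ?_ ?_
      · convert IH m using 1; rfl; omega
      · by_cases hm : m + 1 ≤ s.card
        · have := (hv a).mul (IH (m + 1))
          convert this using 1
          rfl; omega
        · have : (∏ i ∈ s, (X - C (v i)) : Polynomial (MvPolynomial σ F)).coeff (m + 1) = 0 :=
            coeff_eq_zero_of_natDegree_lt (by omega)
          rw [this, mul_zero]
          exact MvPolynomial.isHomogeneous_zero _ _ _

/-- Coefficients of `X ^ (k+n) %ₘ Q` are homogeneous when `Q`'s are. -/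
lemma aux_pow_mod_coeff_homog {F : Type*} [Field F] {σ : Type*} (k : ℕ)
    (Q : Polynomial (MvPolynomial σ F)) (hQ : Q.Monic) (hQdeg : Q.natDegree = k + 1)
    (hQc : ∀ j, (Q.coeff j).IsHomogeneous (k + 1 - j)) :
    ∀ n, ∀ j ≤ k, (((X : Polynomial (MvPolynomial σ F)) ^ (k + n) %ₘ Q).coeff j).IsHomogeneous
      (k + n - j) := by
  have hQdeg' : Q.degree = (k + 1 : ℕ) := by rw [degree_eq_natDegree hQ.ne_zero, hQdeg]
  intro n
  induction n with
  | zero =>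
    intro j hj
    rw [(modByMonic_eq_self_iff hQ).2 (by rw [hQdeg', degree_X_pow]; exact_mod_cast by omega)]
    rw [coeff_X_pow]
    split
    · subst_vars; simpa using MvPolynomial.isHomogeneous_one _ _
    · exact MvPolynomial.isHomogeneous_zero _ _ _
  | succ n IH =>
    set r : Polynomial (MvPolynomial σ F) := X ^ (k + n) %ₘ Q with hr
    have hrdeg : r.degree < Q.degree := degree_modByMonic_lt _ hQ
    have hrcoeff : ∀ m, k + 1 ≤ m → r.coeff m = 0 := by
      intro m hm
      apply coeff_eq_zero_of_degree_lt
      refine lt_of_lt_of_le hrdeg ?_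
      rw [hQdeg']
      exact_mod_cast hm
    -- the key identity
    have key : (X : Polynomial (MvPolynomial σ F)) ^ (k + (n + 1)) %ₘ Q
        = X * r - C (r.coeff k) * Q := by
      have h1 : (X : Polynomial (MvPolynomial σ F)) ^ (k + (n + 1))
          = Q * (X * (X ^ (k + n) /ₘ Q)) + X * r := by
        conv_lhs => rw [show k + (n + 1) = (k + n) + 1 by omega, pow_succ,
          ← modByMonic_add_div (X ^ (k + n) : Polynomial (MvPolynomial σ F)) Q]
        ring
      have h2 : (X * r : Polynomial (MvPolynomial σ F))
          = (X * r - C (r.coeff k) * Q) + C (r.coeff k) * Q := by ring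
      have hdegsmall : (X * r - C (r.coeff k) * Q : Polynomial (MvPolynomial σ F)).degree
          < Q.degree := by
        rw [hQdeg', degree_lt_iff_coeff_zero]
        intro m hm
        have hm' : k + 1 ≤ m := by exact_mod_cast hm
        rcases m with _ | t
        · omega
        rw [coeff_sub, coeff_X_mul, coeff_C_mul]
        rcases Nat.lt_or_ge t (k + 1) with ht | ht
        · have htk : t = k := by omega
          subst htk
          rw [show Q.coeff (t + 1) = 1 by
            rw [show t + 1 = Q.natDegree by omega]; exact hQ.coeff_natDegree]
          ring
        · simp [hrcoeff t ht, show Q.coeff (t + 1) = 0 from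
            coeff_eq_zero_of_natDegree_lt (by omega)]
      rw [h1, add_modByMonic, mul_comm Q, mul_self_modByMonic hQ, zero_add,
        h2, add_modByMonic, mul_self_modByMonic hQ, add_zero,
        (modByMonic_eq_self_iff hQ).2 hdegsmall]
      ring
    intro j hj
    rw [key, coeff_sub, coeff_C_mul]
    have hrk : (r.coeff k).IsHomogeneous n := by
      have := IH k le_rfl
      convert this using 1; omega
    rcases j with _ | m
    · rw [mul_coeff_zero, coeff_X_zero, zero_mul, zero_sub]
      have := hrk.mul (hQc 0)
      convert this.neg using 1; rfl; omega
    · rw [coeff_X_mul]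
      refine MvPolynomial.IsHomogeneous.sub ?_ ?_
      · have := IH m (by omega)
        convert this using 1; rfl; omega
      · have := hrk.mul (hQc (m + 1))
        convert this using 1; rfl; omega

theorem stmt15 (F : Type*) [Field F] (k d : ℕ) (hk : 1 ≤ k) (hd : 1 ≤ d)
    (f : Fin d → F) :
    let R := MvPolynomial (Fin (k + 1)) F
    let K := FractionRing R
    let φ : R →+* K := algebraMap R K
    let P : Polynomial K := ∏ i, (Polynomial.X - Polynomial.C (φ (MvPolynomial.X i)))
    let fc : Polynomial K := Polynomial.X ^ (k + d) +
      ∑ i : Fin d, Polynomial.C (φ (MvPolynomial.C (f i))) * Polynomial.X ^ (k + (i : ℕ))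
    ∃ L L0 : R,
      φ L = (fc %ₘ P).coeff k ∧
      φ L0 = ((Polynomial.X ^ (k + d) : Polynomial K) %ₘ P).coeff k ∧
      L.totalDegree ≤ d ∧
      MvPolynomial.homogeneousComponent d L = L0 := by
  intro R K φ P fc
  -- work over Polynomial R and map to K at the end
  set P₀ : Polynomial R := ∏ i, (X - C (MvPolynomial.X i)) with hP₀def
  set fc₀ : Polynomial R := X ^ (k + d) +
    ∑ i : Fin d, C (MvPolynomial.C (f i)) * X ^ (k + (i : ℕ)) with hfc₀def
  have hP₀monic : P₀.Monic := monic_prod_of_monic _ _ fun i _ => monic_X_sub_C _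
  have hP₀deg : P₀.natDegree = k + 1 := by
    rw [hP₀def, natDegree_prod_of_monic _ _ fun i _ => monic_X_sub_C _]
    simp
  have hPmap : P = P₀.map φ := by
    rw [hP₀def, Polynomial.map_prod]
    simp [P, Polynomial.map_sub]
  have hfcmap : fc = fc₀.map φ := by
    rw [hfc₀def, Polynomial.map_add, Polynomial.map_pow, Polynomial.map_sum]
    simp [fc, Polynomial.map_mul, Polynomial.map_pow]
  have hQc : ∀ j, (P₀.coeff j).IsHomogeneous (k + 1 - j) := by
    intro j
    have := aux_prod_coeff_homog (F := F) (σ := Fin (k + 1)) (Finset.univ : Finset (Fin (k + 1)))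
      (fun i => MvPolynomial.X i) (fun i => MvPolynomial.isHomogeneous_X _ _) j
    simpa using this
  have hhom := aux_pow_mod_coeff_homog k P₀ hP₀monic hP₀deg hQc
  -- the coefficient of x^k in X^(k+m) %ₘ P₀ is homogeneous of degree m
  set g : ℕ → R := fun m => (((X : Polynomial R) ^ (k + m) %ₘ P₀).coeff k) with hgdef
  have hg : ∀ m, (g m).IsHomogeneous m := by
    intro m
    have := hhom m k le_rfl
    convert this using 1
    omega
  -- split the remainder of fc₀ linearly
  have hsum : (∑ i : Fin d, C (MvPolynomial.C (f i)) * X ^ (k + (i : ℕ)) : Polynomial R) %ₘ P₀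
      = ∑ i : Fin d, C (MvPolynomial.C (f i)) * ((X : Polynomial R) ^ (k + (i : ℕ)) %ₘ P₀) := by
    rw [show ∀ p : Polynomial R, p %ₘ P₀ = modByMonicHom P₀ p from fun _ => rfl, map_sum]
    simp only [modByMonicHom_apply, ← smul_eq_C_mul, smul_modByMonic]
  have hsplit : (fc₀ %ₘ P₀).coeff k = g d +
      ∑ i : Fin d, MvPolynomial.C (f i) * g (i : ℕ) := by
    rw [hfc₀def, add_modByMonic, hsum, coeff_add, finset_sum_coeff]
    simp only [coeff_C_mul, hgdef]
  -- witnesses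
  refine ⟨(fc₀ %ₘ P₀).coeff k, g d, ?_, ?_, ?_, ?_⟩
  · rw [hfcmap, hPmap, ← map_modByMonic _ hP₀monic, coeff_map]
  · rw [hPmap, ← Polynomial.map_X (f := φ), ← Polynomial.map_pow,
      ← map_modByMonic _ hP₀monic, coeff_map]
  · rw [hsplit]
    refine le_trans (MvPolynomial.totalDegree_add _ _) (max_le (hg d).totalDegree_le ?_)
    refine le_trans (MvPolynomial.totalDegree_finset_sum _ _) (Finset.sup_le fun i _ => ?_)
    refine le_trans ((MvPolynomial.isHomogeneous_C _ _).mul (hg i)).totalDegree_le ?_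
    simp
  · rw [hsplit, map_add, map_sum]
    have h1 : MvPolynomial.homogeneousComponent d (g d) = g d := by
      rw [MvPolynomial.homogeneousComponent_of_mem
        ((MvPolynomial.mem_homogeneousSubmodule _ _).2 (hg d))]
      simp
    have h2 : ∀ i : Fin d, MvPolynomial.homogeneousComponent d
        (MvPolynomial.C (f i) * g (i : ℕ)) = 0 := by
      intro i
      apply MvPolynomial.homogeneousComponent_eq_zero
      refine lt_of_le_of_lt ((MvPolynomial.isHomogeneous_C _ _).mul (hg i)).totalDegree_le ?_
      simp
    rw [h1, Finset.sum_eq_zero fun i _ => h2 i, add_zero]
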